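/- Let G be a finite simple graph and let A ⊆ V_G. Then G has a minimal dominating set containing A if and only if Split(G) has a minimal dominating set D such that A ⊆ D and D ∩ (V_G' ∖ A') = ∅, where A' := {y' ∈ V_G' : N_G[y] ∩ A ≠ ∅} (equivalently, A' = N_{Split(G)}[A] ∩ V_G'). -/

import Mathlib

variable {V : Type*}

/-- The closed neighborhood `N[x]` of a vertex. -/
def closedNbhd (G : SimpleGraph V) (x : V) : Set V := insert x (G.neighborSet x)

/-- `N[S] = ⋃ x ∈ S, N[x]`. -/
def closedNbhdSet (G : SimpleGraph V) (S : Set V) : Set V := ⋃ x ∈ S, closedNbhd G x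

/-- `D` is a dominating set: `N[D] = V`. -/
def IsDomSet (G : SimpleGraph V) (D : Set V) : Prop := closedNbhdSet G D = Set.univ

/-- Minimal dominating set: dominating, and no proper subset dominates. -/
def IsMinDomSet (G : SimpleGraph V) (D : Set V) : Prop :=
  IsDomSet G D ∧ ∀ D' : Set V, D' ⊂ D → ¬ IsDomSet G D'

/-- Private neighbors of `x` with respect to `D`: `P(D,x) = {y : N[y] ∩ D = {x}}`. -/
def privNbrs (G : SimpleGraph V) (D : Set V) (x : V) : Set V :=
  {y | closedNbhd G y ∩ D = {x}}

/-- Irredundant set: every member has a private neighbor. -/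
def IsIrredundant (G : SimpleGraph V) (D : Set V) : Prop :=
  ∀ x ∈ D, (privNbrs G D x).Nonempty



/-- `Split(G)`: the split graph on `V_G ⊔ V_G'` where `V_G` is a clique, `V_G'` an
independent set, and `x ∈ V_G` is adjacent to the copy `y'` of `y` iff `x ∈ N_G[y]`. -/
def SplitG (G : SimpleGraph V) : SimpleGraph (V ⊕ V) :=
  SimpleGraph.fromRel fun a b =>
    match a, b with
    | Sum.inl _, Sum.inl _ => True
    | Sum.inl x, Sum.inr y => x = y ∨ G.Adj x y
    | _, _ => False

section Aux

variable {V : Type*}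

lemma mem_closedNbhd' (G : SimpleGraph V) (x y : V) :
    y ∈ closedNbhd G x ↔ y = x ∨ G.Adj x y := by
  simp [closedNbhd]

lemma isDomSet_iff' (G : SimpleGraph V) (D : Set V) :
    IsDomSet G D ↔ ∀ v, ∃ d ∈ D, v = d ∨ G.Adj d v := by
  simp only [IsDomSet, closedNbhdSet, Set.eq_univ_iff_forall, Set.mem_iUnion,
    mem_closedNbhd', exists_prop]

lemma split_adj_ll (G : SimpleGraph V) (a b : V) :
    (SplitG G).Adj (Sum.inl a) (Sum.inl b) ↔ a ≠ b := by
  simp [SplitG, SimpleGraph.fromRel_adj]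

lemma split_adj_lr (G : SimpleGraph V) (x y : V) :
    (SplitG G).Adj (Sum.inl x) (Sum.inr y) ↔ x = y ∨ G.Adj x y := by
  simp [SplitG, SimpleGraph.fromRel_adj]

lemma split_adj_rr (G : SimpleGraph V) (a b : V) :
    ¬ (SplitG G).Adj (Sum.inr a) (Sum.inr b) := by
  simp [SplitG, SimpleGraph.fromRel_adj]

end Aux

/-- `G` has a minimal dominating set containing `A` iff `Split(G)` has a minimal
dominating set `D` with `A ⊆ D` and `D ∩ (V_G' ∖ A') = ∅`, where
`A' = {y' : N_G[y] ∩ A ≠ ∅}`. -/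
theorem stmt7 {V : Type*} [Fintype V] (G : SimpleGraph V) (A : Set V) :
    (∃ D : Set V, IsMinDomSet G D ∧ A ⊆ D) ↔
    (∃ D : Set (V ⊕ V), IsMinDomSet (SplitG G) D ∧ (Sum.inl '' A) ⊆ D ∧
      D ∩ (Set.range Sum.inr \
        {v : V ⊕ V | ∃ y : V, v = Sum.inr y ∧ (closedNbhd G y ∩ A).Nonempty}) = ∅) := by
  constructor
  · rintro ⟨D, ⟨hdom, hmin⟩, hA⟩
    refine ⟨Sum.inl '' D, ⟨?_, ?_⟩, Set.image_mono hA, ?_⟩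
    · -- inl '' D dominates SplitG
      rw [isDomSet_iff'] at hdom ⊢
      rintro (x | y)
      · by_cases hx : x ∈ D
        · exact ⟨Sum.inl x, ⟨x, hx, rfl⟩, Or.inl rfl⟩
        · obtain ⟨d, hd, hdx⟩ := hdom x
          have hne : d ≠ x := by rintro rfl; exact hx hd
          exact ⟨Sum.inl d, ⟨d, hd, rfl⟩, Or.inr ((split_adj_ll G d x).2 hne)⟩
      · obtain ⟨d, hd, hdy⟩ := hdom y
        refine ⟨Sum.inl d, ⟨d, hd, rfl⟩, Or.inr ((split_adj_lr G d y).2 ?_)⟩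
        rcases hdy with h | h
        · exact Or.inl h.symm
        · exact Or.inr h
    · -- minimality
      intro D'' hsub hdom''
      set E : Set V := Sum.inl ⁻¹' D'' with hE
      have hED : E ⊂ D := by
        constructor
        · intro x hx
          obtain ⟨d, hd, hdx⟩ := hsub.1 hx
          rw [Sum.inl.injEq] at hdx
          exact hdx ▸ hd
        · intro hcon
          refine hsub.2 ?_
          rintro v ⟨x, hx, rfl⟩
          exact hcon hx
      refine hmin E hED ?_
      rw [isDomSet_iff'] at hdom'' ⊢
      intro y
      obtain ⟨d, hd, hdy⟩ := hdom'' (Sum.inr y)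
      obtain ⟨x, _, rfl⟩ := hsub.1 hd
      rcases hdy with h | h
      · exact absurd h (by simp)
      · have := ((SplitG G).adj_symm h)
        rcases (split_adj_lr G x y).1 ((SplitG G).adj_symm this) with h' | h'
        · exact ⟨x, hd, Or.inl h'.symm⟩
        · exact ⟨x, hd, Or.inr h'⟩
    · -- no inr vertices
      ext v
      simp only [Set.mem_inter_iff, Set.mem_empty_iff_false, iff_false]
      rintro ⟨⟨x, _, rfl⟩, ⟨⟨y, hy⟩, _⟩⟩
      exact absurd hy (by simp)
  · rintro ⟨D, ⟨hdom, hmin⟩, hA, hempty⟩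
    set X : Set V := Sum.inl ⁻¹' D with hX
    have hAX : A ⊆ X := fun a ha => hA ⟨a, ha, rfl⟩
    have hinrA : ∀ y : V, Sum.inr y ∈ D → (closedNbhd G y ∩ A).Nonempty := by
      intro y hy
      by_contra hcon
      have : Sum.inr y ∈ D ∩ (Set.range Sum.inr \
          {v : V ⊕ V | ∃ y : V, v = Sum.inr y ∧ (closedNbhd G y ∩ A).Nonempty}) := by
        refine ⟨hy, ⟨y, rfl⟩, ?_⟩
        rintro ⟨y', hy', hne⟩
        rw [Sum.inr.injEq] at hy'
        exact hcon (hy' ▸ hne)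
      rw [hempty] at this
      exact this
    refine ⟨X, ⟨?_, ?_⟩, hAX⟩
    · -- X dominates G
      rw [isDomSet_iff'] at hdom ⊢
      intro y
      obtain ⟨d, hd, hdy⟩ := hdom (Sum.inr y)
      rcases d with x | z
      · rcases hdy with h | h
        · exact absurd h (by simp)
        · rcases (split_adj_lr G x y).1 ((SplitG G).adj_symm ((SplitG G).adj_symm h)) with h' | h'
          · exact ⟨x, hd, Or.inl h'.symm⟩
          · exact ⟨x, hd, Or.inr h'⟩
      · rcases hdy with h | h
        · rw [Sum.inr.injEq] at h
          obtain ⟨a, haN, haA⟩ := hinrA z (h ▸ hd)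
          rcases (mem_closedNbhd' G z a).1 haN with h' | h'
          · exact ⟨a, hAX haA, Or.inl (h ▸ h'.symm)⟩
          · exact ⟨a, hAX haA, Or.inr (h ▸ h'.symm)⟩
        · exact absurd h (split_adj_rr G z y)
    · -- X minimal
      intro X' hX' hdomX'
      set D' : Set (V ⊕ V) := (Sum.inl '' X') ∪ (D ∩ Set.range Sum.inr) with hD'
      have hD'D : D' ⊂ D := by
        constructor
        · rintro v (⟨x, hx, rfl⟩ | ⟨hv, _⟩)
          · exact hX'.1 hx
          · exact hv
        · intro hcon
          obtain ⟨x, hxX, hxX'⟩ := Set.exists_of_ssubset hX'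
          have : Sum.inl x ∈ D' := hcon hxX
          rcases this with ⟨x', hx', hxx'⟩ | ⟨_, y, hy⟩
          · rw [Sum.inl.injEq] at hxx'
            exact hxX' (hxx' ▸ hx')
          · exact absurd hy (by simp)
      refine hmin D' hD'D ?_
      rw [isDomSet_iff'] at hdomX' ⊢
      rintro (v | y)
      · obtain ⟨x, hx, hxv⟩ := hdomX' v
        rcases hxv with h | h
        · exact ⟨Sum.inl x, Or.inl ⟨x, hx, rfl⟩, Or.inl (by rw [h])⟩
        · exact ⟨Sum.inl x, Or.inl ⟨x, hx, rfl⟩,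
            Or.inr ((split_adj_ll G x v).2 h.ne)⟩
      · obtain ⟨x, hx, hxy⟩ := hdomX' y
        refine ⟨Sum.inl x, Or.inl ⟨x, hx, rfl⟩, Or.inr ((split_adj_lr G x y).2 ?_)⟩
        rcases hxy with h | h
        · exact Or.inl h.symm
        · exact Or.inr h
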